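/- Define dInf : (ℝ × ℝ) → (ℝ × ℝ) → ℝ by dInf a b = max(|a.1 − b.1|, |a.2 − b.2|). Then for all q1, q2, q ∈ ℝ × ℝ: dInf q1 q + dInf q q2 = dInf q1 q2 if and only if q.1 + q.2 lies in the closed interval with endpoints q1.1 + q1.2 and q2.1 + q2.2 (in either order) and q.1 − q.2 lies in the closed interval with endpoints q1.1 − q1.2 and q2.1 − q2.2 (in either order). -/
import Mathlib


/-- The `L_∞` distance in the plane. -/
def dInf (a b : ℝ × ℝ) : ℝ := max |a.1 - b.1| |a.2 - b.2|

lemma key_abs (x y : ℝ) : |x + y| + |x - y| = 2 * max |x| |y| := by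
  rcases max_cases |x| |y| with ⟨h1, h2⟩ | ⟨h1, h2⟩ <;> rw [h1] <;>
    rcases abs_cases x with ⟨hx, _⟩ | ⟨hx, _⟩ <;>
    rcases abs_cases y with ⟨hy, _⟩ | ⟨hy, _⟩ <;>
    rcases abs_cases (x + y) with ⟨h3, _⟩ | ⟨h3, _⟩ <;>
    rcases abs_cases (x - y) with ⟨h4, _⟩ | ⟨h4, _⟩ <;>
    linarith

lemma between_iff (a b c : ℝ) : |a - c| + |c - b| = |a - b| ↔ c ∈ Set.uIcc a b := by
  rw [Set.mem_uIcc]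
  constructor
  · intro h
    rcases le_total a b with hab | hab
    · left
      rw [abs_of_nonpos (by linarith : a - b ≤ 0)] at h
      constructor <;>
        nlinarith [le_abs_self (a - c), neg_abs_le (a - c), le_abs_self (c - b),
          neg_abs_le (c - b)]
    · right
      rw [abs_of_nonneg (by linarith : 0 ≤ a - b)] at h
      constructor <;>
        nlinarith [le_abs_self (a - c), neg_abs_le (a - c), le_abs_self (c - b),
          neg_abs_le (c - b)]
  · rintro (⟨h1, h2⟩ | ⟨h1, h2⟩)
    · rw [abs_of_nonpos (by linarith : a - c ≤ 0), abs_of_nonpos (by linarith : c - b ≤ 0),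
        abs_of_nonpos (by linarith : a - b ≤ 0)]; ring
    · rw [abs_of_nonneg (by linarith : 0 ≤ a - c), abs_of_nonneg (by linarith : 0 ≤ c - b),
        abs_of_nonneg (by linarith : 0 ≤ a - b)]; ring

/-- Under `L_∞`, the set of points `q` with `dInf q1 q + dInf q q2 = dInf q1 q2`
is exactly the smallest bounding parallelogram with sides of slopes `±1`
containing `q1` and `q2`. -/
theorem stmt_16 (q1 q2 q : ℝ × ℝ) :
    dInf q1 q + dInf q q2 = dInf q1 q2 ↔
      q.1 + q.2 ∈ Set.uIcc (q1.1 + q1.2) (q2.1 + q2.2) ∧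
      q.1 - q.2 ∈ Set.uIcc (q1.1 - q1.2) (q2.1 - q2.2) := by
  have k1 := key_abs (q1.1 - q.1) (q1.2 - q.2)
  have k2 := key_abs (q.1 - q2.1) (q.2 - q2.2)
  have k3 := key_abs (q1.1 - q2.1) (q1.2 - q2.2)
  have e1 : q1.1 - q.1 + (q1.2 - q.2) = (q1.1 + q1.2) - (q.1 + q.2) := by ring
  have e2 : q1.1 - q.1 - (q1.2 - q.2) = (q1.1 - q1.2) - (q.1 - q.2) := by ring
  have e3 : q.1 - q2.1 + (q.2 - q2.2) = (q.1 + q.2) - (q2.1 + q2.2) := by ring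
  have e4 : q.1 - q2.1 - (q.2 - q2.2) = (q.1 - q.2) - (q2.1 - q2.2) := by ring
  have e5 : q1.1 - q2.1 + (q1.2 - q2.2) = (q1.1 + q1.2) - (q2.1 + q2.2) := by ring
  have e6 : q1.1 - q2.1 - (q1.2 - q2.2) = (q1.1 - q1.2) - (q2.1 - q2.2) := by ring
  rw [e1, e2] at k1; rw [e3, e4] at k2; rw [e5, e6] at k3
  have tri1 : |(q1.1 + q1.2) - (q2.1 + q2.2)| ≤
      |(q1.1 + q1.2) - (q.1 + q.2)| + |(q.1 + q.2) - (q2.1 + q2.2)| :=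
    abs_sub_le _ _ _
  have tri2 : |(q1.1 - q1.2) - (q2.1 - q2.2)| ≤
      |(q1.1 - q1.2) - (q.1 - q.2)| + |(q.1 - q.2) - (q2.1 - q2.2)| :=
    abs_sub_le _ _ _
  rw [← between_iff, ← between_iff]
  unfold dInf
  constructor
  · intro h
    constructor <;> linarith
  · rintro ⟨h1, h2⟩
    linarith
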